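/- Let d ≥ 0, e = 2^d, and ν a suitable tuple. The last column of M_d^ν equals the all-ones vector, and consequently for every even index n (in the lexicographic enumeration w_0, ..., w_{2^e−1} of F_2^e), the vectors M_d^ν w_n and M_d^ν w_{n+1} are complementary. -/

import Mathlib

open Matrix

/-- The Pascal-triangle matrix over `F₂`: `M 0 = (1)`,
`M (d+1) = [[M d, M d],[0, M d]]`. -/
def pascalM : (d : ℕ) → Matrix (Fin (2^d)) (Fin (2^d)) (ZMod 2)
  | 0 => fun _ _ => 1
  | d+1 =>
    Matrix.reindex (finSumFinEquiv.trans (finCongr (by rw [pow_succ]; ring)))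
      (finSumFinEquiv.trans (finCongr (by rw [pow_succ]; ring)))
      (Matrix.fromBlocks (pascalM d) (pascalM d) 0 (pascalM d))

/-- The `n`-th vector of `F₂^e` in lexicographic order (as binary words,
index `0` being the most significant bit). -/
def vecOf (e n : ℕ) : Fin e → ZMod 2 := fun i => ((n / 2^(e - 1 - i.val)) % 2 : ℕ)

/-- Rotation moving the last entry of a vector to the front. -/
def rot {e : ℕ} (v : Fin e → ZMod 2) : Fin e → ZMod 2 :=
  fun i => v ⟨(i.val + (e - 1)) % e, Nat.mod_lt _ i.pos⟩

/-- `Suitable e ν` : the tuple `(ν 0, …, ν (e-1))` (representing `n_1,…,n_e`)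
satisfies `n_e = 0` and `n_{i+1} ≤ n_i ≤ n_{i+1}+1`. -/
def Suitable (e : ℕ) (ν : ℕ → ℕ) : Prop :=
  ν (e - 1) = 0 ∧ ∀ j, j + 2 ≤ e → ν (j+1) ≤ ν j ∧ ν j ≤ ν (j+1) + 1

/-- The matrix `M_d^ν`, whose `j`-th column is the `j`-th column of `M_d`
rotated `ν j` times. -/
def pascalMnu (d : ℕ) (ν : ℕ → ℕ) : Matrix (Fin (2^d)) (Fin (2^d)) (ZMod 2) :=
  fun i j => (rot^[ν j.val] (fun r => pascalM d r j)) i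

/-- The `d`-th Levin block `λ_d = (M_d w_0)(M_d w_1)⋯(M_d w_{2^e-1})`
as an `ℕ`-indexed word (`e = 2^d`). -/
def levinBlock (d : ℕ) (p : ℕ) : ZMod 2 :=
  (pascalM d).mulVec (vecOf (2^d) (p / 2^d)) ⟨p % 2^d, Nat.mod_lt _ (Nat.two_pow_pos d)⟩

/-- Length of the `d`-th Levin block: `2^d · 2^(2^d)`. -/
def levinLen (d : ℕ) : ℕ := 2^d * 2^(2^d)

/-- The binary expansion of Levin's number `λ = λ₀λ₁λ₂⋯`. -/
def levinWord (p : ℕ) : ZMod 2 := go 0 p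
where
  go (d p : ℕ) : ZMod 2 :=
    if p < levinLen d then levinBlock d p else go (d+1) (p - levinLen d)
  termination_by p
  decreasing_by
    
    have h1 : 0 < levinLen d :=
      Nat.mul_pos (Nat.two_pow_pos d) (Nat.two_pow_pos (2^d))
    omega

/-- Levin's number as a real number in `[0,1)`. -/
noncomputable def levinReal : ℝ := ∑' p : ℕ, ((levinWord p).val : ℝ) / 2^(p+1)

/-- Distance from a real number to the nearest integer. -/
noncomputable def torusDist (y : ℝ) : ℝ := |y - round y|

/-- The pair-correlation counting function
`F_N(s) = (1/N) · #{(i,j) : 1 ≤ i ≠ j ≤ N, ‖x_i − x_j‖ < s/N}`. -/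
noncomputable def pairF (x : ℕ → ℝ) (N : ℕ) (s : ℝ) : ℝ :=
  (Nat.card {p : ℕ × ℕ // 1 ≤ p.1 ∧ p.1 ≤ N ∧ 1 ≤ p.2 ∧ p.2 ≤ N ∧ p.1 ≠ p.2 ∧
      torusDist (x p.1 - x p.2) < s / N} : ℝ) / N

/-- Poissonian pair correlations: `F_N(s) → 2s` for every `s ≥ 0`. -/
def PoissonianPC (x : ℕ → ℝ) : Prop :=
  ∀ s : ℝ, 0 ≤ s → Filter.Tendsto (fun N => pairF x N s) Filter.atTop (nhds (2*s))

lemma pascalM_last_col (d : ℕ) (i : Fin (2^d)) :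
    pascalM d i ⟨2^d - 1, Nat.sub_lt (Nat.two_pow_pos d) Nat.one_pos⟩ = 1 := by
  induction d with
  | zero => rfl
  | succ d ih =>
    have hp : 0 < 2^d := Nat.two_pow_pos d
    have hpow : 2^d + 2^d = 2^(d+1) := by rw [pow_succ]; ring
    show (Matrix.reindex (finSumFinEquiv.trans (finCongr hpow))
      (finSumFinEquiv.trans (finCongr hpow))
      (Matrix.fromBlocks (pascalM d) (pascalM d) 0 (pascalM d))) i _ = 1
    rw [Matrix.reindex_apply, Matrix.submatrix_apply]
    have hsym : (finSumFinEquiv.trans (finCongr hpow)).symm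
        (⟨2^(d+1) - 1, by have := Nat.two_pow_pos (d+1); omega⟩ : Fin (2^(d+1)))
        = Sum.inr ⟨2^d - 1, by omega⟩ := by
      rw [Equiv.symm_apply_eq]
      apply Fin.ext
      simp [finSumFinEquiv, hpow]
      omega
    rw [hsym]
    rcases hh : (finSumFinEquiv.trans (finCongr hpow)).symm i with a | b
    · rw [Matrix.fromBlocks_apply₁₂]; exact ih a
    · rw [Matrix.fromBlocks_apply₂₂]; exact ih b

/-- for a suitable tuple `ν`, the last column of `M_d^ν` is the
all-ones vector, and consequently for every even `n` the vectors `M_d^ν w_n`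
and `M_d^ν w_{n+1}` are complementary. -/
theorem pascalMnu_last_column_and_complementary (d : ℕ) (ν : ℕ → ℕ)
    (h : Suitable (2^d) ν) :
    (∀ i : Fin (2^d),
      pascalMnu d ν i ⟨2^d - 1, by have := Nat.two_pow_pos d; omega⟩ = 1) ∧
    (∀ n : ℕ, Even n → n + 1 < 2^(2^d) →
      ∀ i : Fin (2^d),
        (pascalMnu d ν).mulVec (vecOf (2^d) n) i = 0 ↔
        (pascalMnu d ν).mulVec (vecOf (2^d) (n+1)) i = 1) := by
  have hp : 0 < 2^d := Nat.two_pow_pos d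
  set e := 2^d with he
  set last : Fin (2^d) := ⟨2^d - 1, by omega⟩ with hlastdef
  have hlast : ∀ i : Fin (2^d), pascalMnu d ν i last = 1 := by
    intro i
    have h0 : ν (2^d - 1) = 0 := h.1
    simp only [pascalMnu, hlastdef, h0, Function.iterate_zero, id]
    exact pascalM_last_col d i
  refine ⟨hlast, ?_⟩
  intro n hn hlt i
  have hn2 : n % 2 = 0 := Nat.even_iff.mp hn
  have hv : ∀ j : Fin (2^d), vecOf (2^d) (n+1) j
      = vecOf (2^d) n j + (if j = last then 1 else 0) := by
    intro j
    by_cases hj : j.val = 2^d - 1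
    · have : j = last := Fin.ext hj
      simp only [this, if_pos rfl, vecOf, hlastdef]
      have h1 : 2^d - 1 - (2^d - 1) = 0 := by omega
      rw [h1]
      simp only [pow_zero, Nat.div_one]
      rw [hn2, Nat.succ_mod_two_eq_one_iff.mpr hn2]
      norm_num
    · have hjne : j ≠ last := fun hc => hj (by rw [hc])
      rw [if_neg hjne, add_zero]
      have hk : 1 ≤ 2^d - 1 - j.val := by have := j.isLt; omega
      have hdvd : ¬ 2 ^ (2^d - 1 - j.val) ∣ (n + 1) := by
        intro hdv
        have : (2:ℕ) ∣ n + 1 := dvd_trans (dvd_pow_self 2 (by omega)) hdv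
        omega
      simp only [vecOf]
      rw [Nat.succ_div_of_not_dvd hdvd]
  have hm : (pascalMnu d ν).mulVec (vecOf (2^d) (n+1)) i
      = (pascalMnu d ν).mulVec (vecOf (2^d) n) i + 1 := by
    simp only [Matrix.mulVec, dotProduct, hv, mul_add]
    rw [Finset.sum_add_distrib]
    congr 1
    have : ∀ j : Fin (2^d), pascalMnu d ν i j * (if j = last then 1 else 0)
        = if j = last then pascalMnu d ν i j else 0 := by
      intro j; split <;> simp
    simp only [this, Finset.sum_ite_eq', Finset.mem_univ, if_pos, hlast i]
  rw [hm]
  constructor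
  · intro h0; rw [h0, zero_add]
  · intro h1
    have h2 : (pascalMnu d ν).mulVec (vecOf (2^d) n) i + 1 = 0 + 1 := by
      rw [zero_add]; exact h1
    exact add_right_cancel h2
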